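/- Let E > 0, let X : ℝ² → ℝ² be an invertible linear map (identifying values of X with complex numbers via (a,b) ↦ a + ib), and let α ∈ ℝ. Let F : ℝ → ℝ be a continuous angle lift of the curve θ ↦ (E·cos θ, sin θ), and let G : ℝ → ℝ be a continuous angle lift of the curve θ ↦ X(E·cos θ, sin θ). Then for θ₀ ∈ ℝ the following are equivalent: (i) there exists c > 0 such that X(cos θ₀, sin θ₀)·e^{iα} = c·e^{2iθ₀} (i.e. θ₀ is a fixed point of the bisecting direction φ_L of the linear proto-line-field (X, (cos α, sin α))); (ii) there exists θ₁ ∈ ℝ with θ₀ ≡ F(θ₁) (mod 2π) and 2F(θ₁) − G(θ₁) ≡ α (mod 2π). -/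

import Mathlib

open Real


lemma polar_eq (r t : ℝ) :
    ((r * Real.cos t : ℝ) : ℂ) + ((r * Real.sin t : ℝ) : ℂ) * Complex.I
      = (r : ℂ) * Complex.exp ((t : ℂ) * Complex.I) := by
  rw [Complex.exp_mul_I, ← Complex.ofReal_cos, ← Complex.ofReal_sin]
  push_cast; ring

lemma exp_cancel {a b r c : ℝ} (hr : 0 < r) (hc : 0 < c)
    (h : (r : ℂ) * Complex.exp ((a : ℂ) * Complex.I)
       = (c : ℂ) * Complex.exp ((b : ℂ) * Complex.I)) :
    r = c ∧ ∃ m : ℤ, a = b + 2 * π * m := by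
  have habs : r = c := by
    have := congrArg (fun w : ℂ => ‖w‖) h
    simpa [norm_mul, Complex.norm_exp_ofReal_mul_I, abs_of_pos hr, abs_of_pos hc] using this
  subst habs
  refine ⟨rfl, ?_⟩
  have hr' : (r : ℂ) ≠ 0 := Complex.ofReal_ne_zero.2 hr.ne'
  have hexp : Complex.exp ((a : ℂ) * Complex.I) = Complex.exp ((b : ℂ) * Complex.I) :=
    mul_left_cancel₀ hr' h
  rw [Complex.exp_eq_exp_iff_exists_int] at hexp
  obtain ⟨n, hn⟩ := hexp
  refine ⟨n, ?_⟩
  have : ((a : ℂ) - (b + 2 * π * n : ℝ)) * Complex.I = 0 := by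
    push_cast
    rw [sub_mul, hn]; ring
  rcases mul_eq_zero.1 this with h2 | h2
  · exact Complex.ofReal_inj.1 (sub_eq_zero.1 h2)
  · exact absurd h2 Complex.I_ne_zero

/-- characterization of fixed points of the bisecting direction of a
linear proto-line-field `(X, (cos α, sin α))` via angle lifts `F` and `G`. -/
theorem fixed_point_iff_lift_equation (E α : ℝ) (hE : 0 < E)
    (X : (ℝ × ℝ) ≃ₗ[ℝ] (ℝ × ℝ)) (F G : ℝ → ℝ)
    (hFcont : Continuous F) (hGcont : Continuous G)
    (hFlift : ∀ θ : ℝ, ∃ r > 0,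
      E * cos θ = r * cos (F θ) ∧ sin θ = r * sin (F θ))
    (hGlift : ∀ θ : ℝ, ∃ ρ > 0,
      (X (E * cos θ, sin θ)).1 = ρ * cos (G θ) ∧
      (X (E * cos θ, sin θ)).2 = ρ * sin (G θ))
    (θ₀ : ℝ) :
    (∃ c : ℝ, 0 < c ∧
      (((X (cos θ₀, sin θ₀)).1 : ℂ) + ((X (cos θ₀, sin θ₀)).2 : ℂ) * Complex.I)
          * Complex.exp ((α : ℂ) * Complex.I)
        = (c : ℂ) * Complex.exp ((2 * θ₀ : ℂ) * Complex.I)) ↔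
    (∃ θ₁ : ℝ, (∃ k : ℤ, θ₀ = F θ₁ + 2 * π * k) ∧
      (∃ m : ℤ, 2 * F θ₁ - G θ₁ = α + 2 * π * m)) := by
  constructor
  · rintro ⟨c, hc, h⟩
    -- construct θ₁
    set z : ℂ := ⟨cos θ₀ / E, sin θ₀⟩ with hz_def
    have hz : z ≠ 0 := by
      intro h0
      have h1 : cos θ₀ / E = 0 := congrArg Complex.re h0
      have h2 : sin θ₀ = 0 := congrArg Complex.im h0
      have h3 : cos θ₀ = 0 := by
        field_simp at h1; simpa using h1
      nlinarith [sin_sq_add_cos_sq θ₀]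
    set θ₁ := Complex.arg z with hθ₁
    set s := ‖z‖ with hs_def
    have hs : 0 < s := norm_pos_iff.mpr hz
    have hcos : cos θ₁ = (cos θ₀ / E) / s := Complex.cos_arg hz
    have hsin : sin θ₁ = sin θ₀ / s := Complex.sin_arg z
    obtain ⟨r, hr, hF1, hF2⟩ := hFlift θ₁
    have e1 : cos θ₀ = (s * r) * cos (F θ₁) := by
      have : E * cos θ₁ = cos θ₀ / s := by
        rw [hcos]; field_simp
      rw [this] at hF1
      field_simp at hF1; linarith
    have e2 : sin θ₀ = (s * r) * sin (F θ₁) := by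
      rw [hsin] at hF2
      field_simp at hF2; linarith
    have hA : ((1 : ℝ) : ℂ) * Complex.exp ((θ₀ : ℂ) * Complex.I)
        = ((s * r : ℝ) : ℂ) * Complex.exp ((F θ₁ : ℂ) * Complex.I) := by
      rw [← polar_eq 1 θ₀, ← polar_eq (s * r) (F θ₁), one_mul, one_mul, e1, e2]
    obtain ⟨hsr, k, hk⟩ := exp_cancel one_pos (mul_pos hs hr) hA
    obtain ⟨ρ, hρ, hG1, hG2⟩ := hGlift θ₁
    have hv : ((cos θ₀, sin θ₀) : ℝ × ℝ) = s • (E * cos θ₁, sin θ₁) := by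
      have : (s • ((E * cos θ₁, sin θ₁) : ℝ × ℝ)) = (s * (E * cos θ₁), s * sin θ₁) := rfl
      rw [this, Prod.mk.injEq]
      constructor
      · rw [hF1]; linarith [e1]
      · rw [hF2]; linarith [e2]
    have hXv : X (cos θ₀, sin θ₀) = s • X (E * cos θ₁, sin θ₁) := by
      rw [hv, map_smul]
    have hx1 : (X (cos θ₀, sin θ₀)).1 = (s * ρ) * cos (G θ₁) := by
      rw [hXv]; show s * (X (E * cos θ₁, sin θ₁)).1 = _
      rw [hG1]; ring
    have hx2 : (X (cos θ₀, sin θ₀)).2 = (s * ρ) * sin (G θ₁) := by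
      rw [hXv]; show s * (X (E * cos θ₁, sin θ₁)).2 = _
      rw [hG2]; ring
    rw [hx1, hx2] at h
    have h' : ((s * ρ : ℝ) : ℂ) * Complex.exp (((G θ₁ + α : ℝ) : ℂ) * Complex.I)
        = (c : ℂ) * Complex.exp (((2 * θ₀ : ℝ) : ℂ) * Complex.I) := by
      rw [show ((2 * θ₀ : ℝ) : ℂ) = 2 * (θ₀ : ℂ) by push_cast; ring, ← h, polar_eq]
      push_cast
      rw [add_mul, Complex.exp_add]
      ring
    obtain ⟨_, n, hn⟩ := exp_cancel (mul_pos hs hρ) hc h'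
    refine ⟨θ₁, ⟨k, hk⟩, ⟨-2 * k - n, ?_⟩⟩
    push_cast
    push_cast at hn hk
    linarith
  · rintro ⟨θ₁, ⟨k, hk⟩, ⟨m, hm⟩⟩
    obtain ⟨r, hr, hF1, hF2⟩ := hFlift θ₁
    obtain ⟨ρ, hρ, hG1, hG2⟩ := hGlift θ₁
    have hcos : cos θ₀ = cos (F θ₁) := by
      rw [hk, show F θ₁ + 2 * π * k = F θ₁ + k * (2 * π) by ring,
        Real.cos_add_int_mul_two_pi]
    have hsin : sin θ₀ = sin (F θ₁) := by
      rw [hk, show F θ₁ + 2 * π * k = F θ₁ + k * (2 * π) by ring,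
        Real.sin_add_int_mul_two_pi]
    have hv : ((E * cos θ₁, sin θ₁) : ℝ × ℝ) = r • (cos θ₀, sin θ₀) := by
      have : (r • ((cos θ₀, sin θ₀) : ℝ × ℝ)) = (r * cos θ₀, r * sin θ₀) := rfl
      rw [this, Prod.mk.injEq, hcos, hsin]
      exact ⟨hF1, hF2⟩
    have hXv : X (E * cos θ₁, sin θ₁) = r • X (cos θ₀, sin θ₀) := by
      rw [hv, map_smul]
    have hx1 : (X (cos θ₀, sin θ₀)).1 = (ρ / r) * cos (G θ₁) := by
      have : r * (X (cos θ₀, sin θ₀)).1 = ρ * cos (G θ₁) := by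
        rw [← hG1, hXv]; rfl
      field_simp; linarith
    have hx2 : (X (cos θ₀, sin θ₀)).2 = (ρ / r) * sin (G θ₁) := by
      have : r * (X (cos θ₀, sin θ₀)).2 = ρ * sin (G θ₁) := by
        rw [← hG2, hXv]; rfl
      field_simp; linarith
    refine ⟨ρ / r, div_pos hρ hr, ?_⟩
    rw [hx1, hx2, polar_eq]
    rw [mul_assoc, ← Complex.exp_add]
    have key : (G θ₁ : ℂ) * Complex.I + (α : ℂ) * Complex.I
        = (2 * θ₀ : ℂ) * Complex.I + (-2 * k - m : ℤ) * (2 * π * Complex.I) := by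
      have hreal : G θ₁ + α = 2 * θ₀ + 2 * π * (-2 * k - m) := by
        push_cast; linarith
      have := congrArg (fun x : ℝ => (x : ℂ) * Complex.I) hreal
      push_cast at this ⊢
      linear_combination this
    rw [key, Complex.exp_add, Complex.exp_int_mul_two_pi_mul_I, mul_one]
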